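/- Let f : [0,1]×[0,1] → (0,∞), written f(z|θ), be such that z ↦ f(z|θ) is continuous for each θ and θ ↦ f(z|θ) is differentiable for each z. Set F(z|θ) := ∫₀^z f(w|θ) dw, assume F(z|θ) < 1 for all z, θ, assume θ ↦ F(z|θ) is differentiable with ∂_θ F(z|θ) = ∫₀^z ∂_θ f(w|θ) dw, and define the hazard rate λ(z|θ) := f(z|θ)/(1−F(z|θ)). If for every z the map θ ↦ λ(z|θ) is nonincreasing, then for all 0 ≤ z ≤ θ ≤ 1: ∂_θ f(z|θ) ≤ λ(z|z) · ∂_θ[1−F(z|θ)]. -/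
import Mathlib


open MeasureTheory Topology Filter

noncomputable section

/-- If `g` is antitone on `[0,1]` and differentiable at `θ ∈ [0,1]`, its derivative is ≤ 0. -/
lemma antitoneOn_Icc_deriv_nonpos {g : ℝ → ℝ} {d θ : ℝ}
    (hθ : θ ∈ Set.Icc (0:ℝ) 1) (hg : AntitoneOn g (Set.Icc 0 1))
    (hd : HasDerivAt g d θ) : d ≤ 0 := by
  rcases lt_or_ge θ 1 with h1 | h1
  · have ht : Filter.Tendsto (slope g θ) (𝓝[>] θ) (𝓝 d) :=
      (hasDerivAt_iff_tendsto_slope.mp hd).mono_left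
        (nhdsWithin_mono _ (fun x hx => ne_of_gt hx))
    refine le_of_tendsto ht ?_
    filter_upwards [Ioc_mem_nhdsGT_of_mem ⟨le_refl θ, h1⟩] with t ht
    have hgt : g t ≤ g θ :=
      hg hθ ⟨le_trans hθ.1 ht.1.le, ht.2⟩ ht.1.le
    rw [slope_def_field]
    exact div_nonpos_of_nonpos_of_nonneg (sub_nonpos.mpr hgt)
      (sub_nonneg.mpr ht.1.le)
  · have h0 : (0:ℝ) < θ := lt_of_lt_of_le one_pos h1
    have ht : Filter.Tendsto (slope g θ) (𝓝[<] θ) (𝓝 d) :=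
      (hasDerivAt_iff_tendsto_slope.mp hd).mono_left
        (nhdsWithin_mono _ (fun x hx => ne_of_lt hx))
    refine le_of_tendsto ht ?_
    filter_upwards [Ico_mem_nhdsLT_of_mem ⟨h0, le_refl θ⟩] with t ht
    have hgt : g θ ≤ g t :=
      hg ⟨ht.1, le_trans ht.2.le hθ.2⟩ hθ ht.2.le
    rw [slope_def_field]
    exact div_nonpos_of_nonneg_of_nonpos (sub_nonneg.mpr hgt)
      (sub_nonpos.mpr ht.2.le)

theorem stmt18
    -- f z θ stands for the conditional density f(z|θ)
    (f : ℝ → ℝ → ℝ)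
    (hf_pos : ∀ z ∈ Set.Icc (0:ℝ) 1, ∀ θ ∈ Set.Icc (0:ℝ) 1, 0 < f z θ)
    (hf_cont : ∀ θ ∈ Set.Icc (0:ℝ) 1, ContinuousOn (fun z => f z θ) (Set.Icc 0 1))
    -- df z θ is the partial derivative ∂_θ f(z|θ)
    (df : ℝ → ℝ → ℝ)
    (hdf : ∀ z ∈ Set.Icc (0:ℝ) 1, ∀ θ ∈ Set.Icc (0:ℝ) 1,
      HasDerivAt (fun t => f z t) (df z θ) θ)
    -- F z θ is the conditional cdf F(z|θ)
    (F : ℝ → ℝ → ℝ)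
    (hF : ∀ z ∈ Set.Icc (0:ℝ) 1, ∀ θ ∈ Set.Icc (0:ℝ) 1,
      F z θ = ∫ w in (0:ℝ)..z, f w θ)
    (hFlt : ∀ z ∈ Set.Icc (0:ℝ) 1, ∀ θ ∈ Set.Icc (0:ℝ) 1, F z θ < 1)
    -- ∂_θ F(z|θ) exists and equals ∫₀^z ∂_θ f(w|θ) dw
    (hdF : ∀ z ∈ Set.Icc (0:ℝ) 1, ∀ θ ∈ Set.Icc (0:ℝ) 1,
      HasDerivAt (fun t => F z t) (∫ w in (0:ℝ)..z, df w θ) θ)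
    -- the hazard rate λ(z|θ) = f(z|θ)/(1−F(z|θ)) is nonincreasing in θ
    (hlam : ∀ z ∈ Set.Icc (0:ℝ) 1,
      AntitoneOn (fun θ => f z θ / (1 - F z θ)) (Set.Icc 0 1)) :
    ∀ z θ : ℝ, 0 ≤ z → z ≤ θ → θ ≤ 1 →
      df z θ ≤ (f z z / (1 - F z z)) * (-(∫ w in (0:ℝ)..z, df w θ)) := by
  intro z θ hz0 hzθ hθ1
  have hzI : z ∈ Set.Icc (0:ℝ) 1 := ⟨hz0, le_trans hzθ hθ1⟩
  have hθI : θ ∈ Set.Icc (0:ℝ) 1 := ⟨le_trans hz0 hzθ, hθ1⟩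
  -- positivity of 1 - F
  have hpos : ∀ w ∈ Set.Icc (0:ℝ) 1, ∀ t ∈ Set.Icc (0:ℝ) 1, 0 < 1 - F w t := by
    intro w hw t ht; linarith [hFlt w hw t ht]
  -- F w t as a function of w has derivative f w t at interior points
  have hFder : ∀ t ∈ Set.Icc (0:ℝ) 1, ∀ w ∈ Set.Ioo (0:ℝ) 1,
      HasDerivAt (fun u => F u t) (f w t) w := by
    intro t ht w hw
    have hcont : ContinuousOn (fun u => f u t) (Set.Icc 0 1) := hf_cont t ht
    have hci : ContinuousOn (fun u => f u t) (Set.Ioo 0 1) :=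
      hcont.mono Set.Ioo_subset_Icc_self
    have hint : IntervalIntegrable (fun u => f u t) volume 0 w := by
      apply ContinuousOn.intervalIntegrable
      apply hcont.mono
      rw [Set.uIcc_of_le hw.1.le]
      exact Set.Icc_subset_Icc le_rfl hw.2.le
    have hmeas : StronglyMeasurableAtFilter (fun u => f u t) (𝓝 w) volume :=
      hci.stronglyMeasurableAtFilter isOpen_Ioo w hw
    have hca : ContinuousAt (fun u => f u t) w :=
      hcont.continuousAt (Icc_mem_nhds hw.1 hw.2)
    have h1 : HasDerivAt (fun u => ∫ x in (0:ℝ)..u, f x t) (f w t) w :=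
      intervalIntegral.integral_hasDerivAt_right hint hmeas hca
    refine h1.congr_of_eventuallyEq ?_
    filter_upwards [isOpen_Ioo.mem_nhds hw] with u hu
    exact hF u ⟨hu.1.le, hu.2.le⟩ t ht
  -- continuity of w ↦ F w t on [0,1]
  have hFcont : ∀ t ∈ Set.Icc (0:ℝ) 1, ContinuousOn (fun w => F w t) (Set.Icc 0 1) := by
    intro t ht
    have hint : IntegrableOn (fun u => f u t) (Set.uIcc (0:ℝ) 1) volume := by
      rw [Set.uIcc_of_le zero_le_one]
      exact (hf_cont t ht).integrableOn_Icc
    have := intervalIntegral.continuousOn_primitive_interval (f := fun u => f u t)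
      (a := (0:ℝ)) (b := 1) (μ := volume) hint
    rw [Set.uIcc_of_le zero_le_one] at this
    exact this.congr (fun w hw => hF w hw t ht)
  -- θ ↦ F z θ is antitone on [0,1]
  have hFanti : AntitoneOn (fun t => F z t) (Set.Icc 0 1) := by
    intro t1 ht1 t2 ht2 h12
    -- consider φ w = (1 - F w t2) / (1 - F w t1), monotone on [0, z]
    set φ : ℝ → ℝ := fun w => (1 - F w t2) / (1 - F w t1) with hφ
    have hsub : Set.Icc (0:ℝ) z ⊆ Set.Icc (0:ℝ) 1 :=
      Set.Icc_subset_Icc le_rfl hzI.2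
    have hIoosub : Set.Ioo (0:ℝ) z ⊆ Set.Ioo (0:ℝ) 1 :=
      Set.Ioo_subset_Ioo le_rfl hzI.2
    have hφmono : MonotoneOn φ (Set.Icc 0 z) := by
      apply monotoneOn_of_deriv_nonneg (convex_Icc 0 z)
      · apply ContinuousOn.div
        · exact (continuousOn_const.sub ((hFcont t2 ht2).mono hsub))
        · exact (continuousOn_const.sub ((hFcont t1 ht1).mono hsub))
        · intro w hw
          exact ne_of_gt (hpos w (hsub hw) t1 ht1)
      · rw [interior_Icc]
        intro w hw
        have hwI : w ∈ Set.Ioo (0:ℝ) 1 := hIoosub hw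
        have hwIcc : w ∈ Set.Icc (0:ℝ) 1 := Set.Ioo_subset_Icc_self hwI
        have h2 : HasDerivAt (fun u => 1 - F u t2) (-(f w t2)) w :=
          (hFder t2 ht2 w hwI).const_sub 1
        have h1 : HasDerivAt (fun u => 1 - F u t1) (-(f w t1)) w :=
          (hFder t1 ht1 w hwI).const_sub 1
        exact ((h2.div h1 (ne_of_gt (hpos w hwIcc t1 ht1))).differentiableAt).differentiableWithinAt
      · rw [interior_Icc]
        intro w hw
        have hwI : w ∈ Set.Ioo (0:ℝ) 1 := hIoosub hw
        have hwIcc : w ∈ Set.Icc (0:ℝ) 1 := Set.Ioo_subset_Icc_self hwI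
        have h2 : HasDerivAt (fun u => 1 - F u t2) (-(f w t2)) w :=
          (hFder t2 ht2 w hwI).const_sub 1
        have h1 : HasDerivAt (fun u => 1 - F u t1) (-(f w t1)) w :=
          (hFder t1 ht1 w hwI).const_sub 1
        have hne1 : (1 - F w t1) ≠ 0 := ne_of_gt (hpos w hwIcc t1 ht1)
        have hd : HasDerivAt φ
            ((-(f w t2) * (1 - F w t1) - (1 - F w t2) * (-(f w t1))) / (1 - F w t1)^2) w :=
          h2.div h1 hne1
        rw [hd.deriv]
        apply div_nonneg _ (sq_nonneg _)
        have hlamw := hlam w hwIcc ht1 ht2 h12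
        -- f w t2 / (1 - F w t2) ≤ f w t1 / (1 - F w t1)
        have hp1 : 0 < 1 - F w t1 := hpos w hwIcc t1 ht1
        have hp2 : 0 < 1 - F w t2 := hpos w hwIcc t2 ht2
        rw [div_le_div_iff₀ hp2 hp1] at hlamw
        nlinarith [hlamw]
    have hzero : φ 0 = 1 := by
      have hF0 : ∀ t ∈ Set.Icc (0:ℝ) 1, F 0 t = 0 := by
        intro t ht
        rw [hF 0 (Set.left_mem_Icc.mpr zero_le_one) t ht, intervalIntegral.integral_same]
      simp [hφ, hF0 t1 ht1, hF0 t2 ht2]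
    have hmono := hφmono (Set.left_mem_Icc.mpr hz0) ⟨hz0, le_refl z⟩ hz0
    rw [hzero] at hmono
    have hp1 : 0 < 1 - F z t1 := hpos z hzI t1 ht1
    have hp2 : 0 < 1 - F z t2 := hpos z hzI t2 ht2
    have : 1 - F z t1 ≤ 1 - F z t2 := by
      rw [le_div_iff₀ hp1] at hmono
      linarith
    linarith
  set H : ℝ := ∫ w in (0:ℝ)..z, df w θ with hH
  -- Step 1 : H ≤ 0
  have hHle : H ≤ 0 :=
    antitoneOn_Icc_deriv_nonpos hθI hFanti (hdF z hzI θ hθI)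
  -- Step 2 : derivative of hazard rate at θ is ≤ 0
  have hpzθ : 0 < 1 - F z θ := hpos z hzI θ hθI
  have hd1 : HasDerivAt (fun t => 1 - F z t) (-H) θ := (hdF z hzI θ hθI).const_sub 1
  have hdhaz : HasDerivAt (fun t => f z t / (1 - F z t))
      ((df z θ * (1 - F z θ) - f z θ * (-H)) / (1 - F z θ)^2) θ :=
    (hdf z hzI θ hθI).div hd1 (ne_of_gt hpzθ)
  have hdle : (df z θ * (1 - F z θ) - f z θ * (-H)) / (1 - F z θ)^2 ≤ 0 :=
    antitoneOn_Icc_deriv_nonpos hθI (hlam z hzI) hdhaz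
  have hkey : df z θ * (1 - F z θ) + f z θ * H ≤ 0 := by
    have hsq : 0 < (1 - F z θ)^2 := by positivity
    rw [div_nonpos_iff] at hdle
    rcases hdle with ⟨_, h⟩ | ⟨h, _⟩
    · linarith
    · linarith
  -- df z θ ≤ (f z θ / (1 - F z θ)) * (-H)
  have hstep2 : df z θ ≤ (f z θ / (1 - F z θ)) * (-H) := by
    rw [div_mul_eq_mul_div, le_div_iff₀ hpzθ]
    nlinarith
  -- Step 3 : hazard comparison
  have hlamcmp : f z θ / (1 - F z θ) ≤ f z z / (1 - F z z) :=
    hlam z hzI hzI hθI hzθ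
  have hlamnn : 0 ≤ f z θ / (1 - F z θ) :=
    le_of_lt (div_pos (hf_pos z hzI θ hθI) hpzθ)
  calc df z θ ≤ (f z θ / (1 - F z θ)) * (-H) := hstep2
    _ ≤ (f z z / (1 - F z z)) * (-H) :=
        mul_le_mul_of_nonneg_right hlamcmp (by linarith)

end
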